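/- Let n ≥ 1. There exists a constant C = C(n) > 0 such that for all α ∈ [0,1], all r ∈ ℕ with r ≥ 1, and all ℓ ∈ ℕ: Π_{r,c^{(ℓ)}}(α) ≤ C·2^{−r}·( cot(π/(2(2^n+1))) )^{r/n}. -/

import Mathlib

open Real MeasureTheory Filter

noncomputable section

/-- The perturbing sequence: `c j = 1` if `n ∣ j`, else `0`. -/
def pert (n j : ℕ) : ℕ := if n ∣ j then 1 else 0

/-- The lacunary trigonometric product `Π_{r,γ}(α) = ∏_{j<r} |cos(2^j α π + γ_j π/2)|`. -/
def PiProd (r : ℕ) (γ : ℕ → ℕ) (α : ℝ) : ℝ :=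
  ∏ j ∈ Finset.range r, |Real.cos (2 ^ j * α * π + γ j * π / 2)|

namespace EvilAux
open Finset

/-- telescoping product of cosines -/
lemma sin_mul_prod_cos (u : ℝ) : ∀ J : ℕ,
    Real.sin (2 ^ J * u) = 2 ^ J * (Real.sin u * ∏ j ∈ range J, Real.cos (2 ^ j * u))
  | 0 => by simp
  | (J+1) => by
    have h2 : (2:ℝ) ^ (J+1) * u = 2 * (2 ^ J * u) := by ring
    rw [h2, Real.sin_two_mul, sin_mul_prod_cos u J, prod_range_succ]
    ring

def blockP (n : ℕ) (u : ℝ) : ℝ :=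
  (∏ q ∈ range (n-1), |Real.cos (2 ^ q * u)|) * |Real.sin (2 ^ (n-1) * u)|

lemma blockP_nonneg (n : ℕ) (u : ℝ) : 0 ≤ blockP n u := by
  unfold blockP; positivity

lemma blockP_le_sin (n : ℕ) (u : ℝ) : blockP n u ≤ |Real.sin (2 ^ (n-1) * u)| := by
  unfold blockP
  have h1 : (∏ q ∈ range (n-1), |Real.cos (2 ^ q * u)|) ≤ 1 :=
    Finset.prod_le_one (fun i _ => abs_nonneg _) (fun i _ => Real.abs_cos_le_one _)
  nlinarith [abs_nonneg (Real.sin (2 ^ (n-1) * u)), Finset.prod_nonneg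
    (fun i (_ : i ∈ range (n-1)) => abs_nonneg (Real.cos (2 ^ i * u)))]

lemma blockP_le_one (n : ℕ) (u : ℝ) : blockP n u ≤ 1 :=
  le_trans (blockP_le_sin n u) (Real.abs_sin_le_one _)

lemma block_key (n : ℕ) (u : ℝ) :
    2 ^ (n-1) * (|Real.sin u| * blockP n u) = Real.sin (2 ^ (n-1) * u) ^ 2 := by
  unfold blockP
  have h := sin_mul_prod_cos u (n-1)
  have h2 : |Real.sin (2 ^ (n-1) * u)| ^ 2 = Real.sin (2 ^ (n-1) * u) ^ 2 := sq_abs _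
  rw [← h2]
  have h3 : |Real.sin (2 ^ (n-1) * u)| = 2 ^ (n-1) * (|Real.sin u| * ∏ j ∈ range (n-1), |Real.cos (2 ^ j * u)|) := by
    rw [← Finset.abs_prod, ← abs_mul]
    rw [h, abs_mul]
    congr 1
    · rw [abs_of_nonneg]; positivity
  calc 2 ^ (n-1) * (|Real.sin u| * ((∏ q ∈ range (n-1), |Real.cos (2 ^ q * u)|) * |Real.sin (2 ^ (n-1) * u)|))
      = (2 ^ (n-1) * (|Real.sin u| * ∏ q ∈ range (n-1), |Real.cos (2 ^ q * u)|)) * |Real.sin (2 ^ (n-1) * u)| := by ring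
    _ = |Real.sin (2 ^ (n-1) * u)| * |Real.sin (2 ^ (n-1) * u)| := by rw [← h3]
    _ = |Real.sin (2 ^ (n-1) * u)| ^ 2 := by ring

lemma abs_sin_add_int_mul_pi (x : ℝ) (k : ℤ) : |Real.sin (x + k * π)| = |Real.sin x| := by
  have hs : Real.sin (k * π) = 0 := Real.sin_int_mul_pi k
  have hc : |Real.cos (k * π)| = 1 := by
    have := Real.sin_sq_add_cos_sq ((k:ℝ) * π)
    rw [hs] at this
    nlinarith [abs_nonneg (Real.cos (k * π)), sq_abs (Real.cos ((k:ℝ) * π))]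
  rw [Real.sin_add, hs]
  rw [mul_zero, add_zero, abs_mul, hc, mul_one]

lemma abs_cos_add_int_mul_pi (x : ℝ) (k : ℤ) : |Real.cos (x + k * π)| = |Real.cos x| := by
  have hs : Real.sin (k * π) = 0 := Real.sin_int_mul_pi k
  have hc : |Real.cos (k * π)| = 1 := by
    have := Real.sin_sq_add_cos_sq ((k:ℝ) * π)
    rw [hs] at this
    nlinarith [abs_nonneg (Real.cos (k * π)), sq_abs (Real.cos ((k:ℝ) * π))]
  rw [Real.cos_add, hs]
  rw [mul_zero, sub_zero, abs_mul, hc, mul_one]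

lemma sin_two_pow_eq_zero {v : ℝ} (h : Real.sin v = 0) (k : ℕ) : Real.sin (2 ^ k * v) = 0 := by
  induction k with
  | zero => simpa using h
  | succ k ih =>
    have : (2:ℝ) ^ (k+1) * v = 2 * (2 ^ k * v) := by ring
    rw [this, Real.sin_two_mul, ih]; ring



def th (n : ℕ) : ℝ := π / (2 * (2 ^ n + 1))

lemma two_pow_ge_two {n : ℕ} (hn : 1 ≤ n) : (2:ℝ) ≤ 2 ^ n := by
  calc (2:ℝ) = 2 ^ 1 := by norm_num
  _ ≤ 2 ^ n := by exact pow_le_pow_right₀ (by norm_num) hn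

lemma th_pos (n : ℕ) : 0 < th n := by
  unfold th
  apply div_pos Real.pi_pos
  positivity

lemma th_le {n : ℕ} (hn : 1 ≤ n) : th n ≤ π / 6 := by
  unfold th
  apply div_le_div_of_nonneg_left Real.pi_pos.le (by norm_num)
  nlinarith [two_pow_ge_two hn]

lemma th_lt_half_pi {n : ℕ} (hn : 1 ≤ n) : th n < π / 2 := by
  have := th_le hn
  nlinarith [Real.pi_pos]

lemma sin_th_pos {n : ℕ} (hn : 1 ≤ n) : 0 < Real.sin (th n) :=
  Real.sin_pos_of_pos_of_lt_pi (th_pos n) (by nlinarith [th_lt_half_pi hn, Real.pi_pos])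

lemma cos_th_pos {n : ℕ} (hn : 1 ≤ n) : 0 < Real.cos (th n) :=
  Real.cos_pos_of_mem_Ioo ⟨by nlinarith [th_pos n, Real.pi_pos], th_lt_half_pi hn⟩

lemma cot_th_eq (n : ℕ) : Real.cot (th n) = Real.cos (th n) / Real.sin (th n) :=
  Real.cot_eq_cos_div_sin _

lemma one_le_cot_th {n : ℕ} (hn : 1 ≤ n) : 1 ≤ Real.cot (th n) := by
  rw [cot_th_eq]
  rw [le_div_iff₀ (sin_th_pos hn), one_mul]
  have h1 : Real.sin (th n) ≤ th n := Real.sin_le (th_pos n).le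
  have h2 : 1 - (th n) ^ 2 / 2 ≤ Real.cos (th n) := Real.one_sub_sq_div_two_le_cos
  have h3 : th n ≤ π / 6 := th_le hn
  have h4 : π < 3.15 := Real.pi_lt_d2
  have h5 : 0 < th n := th_pos n
  nlinarith

lemma cot_th_pos {n : ℕ} (hn : 1 ≤ n) : 0 < Real.cot (th n) := by
  linarith [one_le_cot_th hn]

lemma b_mul_th (n : ℕ) : ((2:ℝ) ^ n + 1) * th n = π / 2 := by
  unfold th
  have h : (2:ℝ) ^ n + 1 ≠ 0 := by positivity
  field_simp

set_option maxHeartbeats 1000000 in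
/-- generic concavity comparison -/
lemma conc_core {a b θ : ℝ} (ha1 : 1 ≤ a) (hab : a + 2 = b) (hθpos : 0 < θ)
    (hbθ : b * θ = π / 2) (hkey : a ^ 2 ≤ (1 - 2 * θ ^ 2) * b ^ 2)
    {ψ : ℝ} (h0 : 0 ≤ ψ) (hψ : ψ ≤ θ) :
    Real.sin (a * ψ) ≤ Real.cos (2 * θ) * Real.sin (b * ψ) := by
  have hπ0 : 0 < π := Real.pi_pos
  set h : ℝ → ℝ := fun x => Real.cos (2 * θ) * Real.sin (b * x) - Real.sin (a * x) with hhdef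
  have hda : ∀ x : ℝ, HasDerivAt h (Real.cos (2*θ) * (Real.cos (b*x) * b) - Real.cos (a*x) * a) x := by
    intro x
    have h1 : HasDerivAt (fun y : ℝ => b * y) (b * 1) x := (hasDerivAt_id x).const_mul b
    have h2 : HasDerivAt (fun y : ℝ => Real.sin (b * y)) (Real.cos (b*x) * (b*1)) x :=
      (Real.hasDerivAt_sin (b*x)).comp x h1
    have h3 : HasDerivAt (fun y : ℝ => a * y) (a * 1) x := (hasDerivAt_id x).const_mul a
    have h4 : HasDerivAt (fun y : ℝ => Real.sin (a * y)) (Real.cos (a*x) * (a*1)) x :=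
      (Real.hasDerivAt_sin (a*x)).comp x h3
    have h5 := (h2.const_mul (Real.cos (2*θ))).sub h4
    simp only [mul_one] at h5; exact h5
  have hda2 : ∀ x : ℝ, HasDerivAt (fun x => Real.cos (2*θ) * (Real.cos (b*x) * b) - Real.cos (a*x) * a)
      (Real.cos (2*θ) * (-Real.sin (b*x) * b * b) - (-Real.sin (a*x) * a * a)) x := by
    intro x
    have h1 : HasDerivAt (fun y : ℝ => b * y) (b * 1) x := (hasDerivAt_id x).const_mul b
    have h2 : HasDerivAt (fun y : ℝ => Real.cos (b * y)) (-Real.sin (b*x) * (b*1)) x :=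
      (Real.hasDerivAt_cos (b*x)).comp x h1
    have h3 : HasDerivAt (fun y : ℝ => a * y) (a * 1) x := (hasDerivAt_id x).const_mul a
    have h4 : HasDerivAt (fun y : ℝ => Real.cos (a * y)) (-Real.sin (a*x) * (a*1)) x :=
      (Real.hasDerivAt_cos (a*x)).comp x h3
    have h5 := ((h2.mul_const b).const_mul (Real.cos (2*θ))).sub (h4.mul_const a)
    simp only [mul_one] at h5; exact h5
  have hconc : ConcaveOn ℝ (Set.Icc 0 θ) h := by
    apply concaveOn_of_hasDerivWithinAt2_nonpos (convex_Icc 0 θ)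
      (Continuous.continuousOn (by continuity))
      (fun x _ => (hda x).hasDerivWithinAt)
      (fun x _ => (hda2 x).hasDerivWithinAt)
    intro x hx
    rw [interior_Icc] at hx
    obtain ⟨hx0, hxθ⟩ := hx
    have hb1 : 3 ≤ b := by linarith
    have hax0 : 0 ≤ a * x := by nlinarith
    have haxb : a * x ≤ b * x := by nlinarith
    have hbxpi : b * x ≤ π / 2 := by nlinarith
    have hm1 : a * x ∈ Set.Icc (-(π/2)) (π/2) := by
      constructor
      · nlinarith
      · linarith
    have hm2 : b * x ∈ Set.Icc (-(π/2)) (π/2) := by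
      constructor
      · nlinarith
      · linarith
    have hsin_ab : Real.sin (a * x) ≤ Real.sin (b * x) :=
      Real.sin_le_sin_of_le_of_le_pi_div_two hm1.1 hm2.2 haxb
    have hsa : 0 ≤ Real.sin (a * x) := Real.sin_nonneg_of_nonneg_of_le_pi hax0 (by nlinarith)
    have hsb : 0 ≤ Real.sin (b * x) := Real.sin_nonneg_of_nonneg_of_le_pi (by nlinarith) (by nlinarith)
    have hcos2θ : 1 - 2 * θ^2 ≤ Real.cos (2 * θ) := by
      have := Real.one_sub_sq_div_two_le_cos (x := 2 * θ)
      nlinarith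
    have hfin : a^2 * Real.sin (a*x) ≤ Real.cos (2*θ) * b^2 * Real.sin (b*x) := by
      calc a^2 * Real.sin (a*x) ≤ a^2 * Real.sin (b*x) := by nlinarith
      _ ≤ (1 - 2*θ^2) * b^2 * Real.sin (b*x) := by nlinarith
      _ ≤ Real.cos (2*θ) * b^2 * Real.sin (b*x) := by
          nlinarith [mul_nonneg (mul_nonneg (sub_nonneg.2 hcos2θ) (sq_nonneg b)) hsb]
    nlinarith
  have h0' : h 0 = 0 := by simp [hhdef]
  have hθ' : h θ = 0 := by
    have h1 : Real.sin (b * θ) = 1 := by rw [hbθ, Real.sin_pi_div_two]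
    have h2 : a * θ = π / 2 - 2 * θ := by nlinarith
    simp only [hhdef, h1, h2, Real.sin_pi_div_two_sub]
    ring
  have hseg : ψ ∈ segment ℝ (0:ℝ) θ := by
    rw [segment_eq_Icc hθpos.le]; exact ⟨h0, hψ⟩
  have hmin := hconc.ge_on_segment (Set.left_mem_Icc.2 hθpos.le) (Set.right_mem_Icc.2 hθpos.le) hseg
  rw [h0', hθ'] at hmin
  have hh : 0 ≤ h ψ := by simpa using hmin
  simp only [hhdef] at hh
  linarith

/-- the key concavity inequality specialized -/
lemma mono_ineq {n : ℕ} (hn : 1 ≤ n) {ψ : ℝ} (h0 : 0 ≤ ψ) (hψ : ψ ≤ th n) :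
    Real.sin (((2:ℝ) ^ n - 1) * ψ) ≤ Real.cos (2 * th n) * Real.sin (((2:ℝ) ^ n + 1) * ψ) := by
  have hc2 : (2:ℝ) ≤ 2 ^ n := two_pow_ge_two hn
  have hbθ : ((2:ℝ)^n + 1) * th n = π / 2 := b_mul_th n
  have hπ : π < 3.15 := Real.pi_lt_d2
  have hπ0 : 0 < π := Real.pi_pos
  have hθpos : 0 < th n := th_pos n
  apply conc_core (by linarith) (by ring) hθpos hbθ _ h0 hψ
  -- key : (2^n-1)^2 ≤ (1 - 2 θ^2)(2^n+1)^2
  have h1 : 2 * (th n)^2 * ((2:ℝ)^n+1)^2 = 2 * (((2:ℝ)^n + 1) * th n)^2 := by ring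
  have h2 : 2 * (((2:ℝ)^n + 1) * th n)^2 = π^2 / 2 := by rw [hbθ]; ring
  nlinarith

lemma abs_sin_abs (x : ℝ) : |Real.sin (|x|)| = |Real.sin x| := by
  rcases abs_cases x with ⟨h1, _⟩ | ⟨h1, _⟩ <;> rw [h1]
  rw [Real.sin_neg, abs_neg]

lemma cot_th_mul_sin (n : ℕ) (hn : 1 ≤ n) :
    Real.cot (th n) * Real.sin (th n) = Real.cos (th n) := by
  rw [cot_th_eq, div_mul_cancel₀]
  exact (sin_th_pos hn).ne'

lemma two_pow_mul_th {n : ℕ} (hn : 1 ≤ n) : (2:ℝ) ^ n * th n = π / 2 - th n := by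
  linear_combination b_mul_th n

set_option maxHeartbeats 1000000 in
lemma tan_pair {n : ℕ} (hn : 1 ≤ n) {ψ : ℝ} (h0 : 0 ≤ ψ) (hψθ : ψ ≤ th n) :
    Real.cos ψ * Real.sin ((2:ℝ) ^ n * ψ) ≤
      Real.cot (th n) ^ 2 * (Real.sin ψ * Real.cos ((2:ℝ) ^ n * ψ)) := by
  have hπ0 : 0 < π := Real.pi_pos
  have hθpos : 0 < th n := th_pos n
  have hsθ : 0 < Real.sin (th n) := sin_th_pos hn
  have hcθ : 0 < Real.cos (th n) := cos_th_pos hn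
  have hAs : Real.cot (th n) * Real.sin (th n) = Real.cos (th n) := cot_th_mul_sin n hn
  have hmono := mono_ineq hn h0 hψθ
  have he1 : ((2:ℝ) ^ n + 1) * ψ = (2:ℝ) ^ n * ψ + ψ := by ring
  have he2 : ((2:ℝ) ^ n - 1) * ψ = (2:ℝ) ^ n * ψ - ψ := by ring
  rw [he1, he2, Real.sin_add, Real.sin_sub] at hmono
  have hcos2 : Real.cos (2 * th n) = 1 - 2 * Real.sin (th n) ^ 2 := by
    rw [Real.cos_two_mul]
    nlinarith [Real.sin_sq_add_cos_sq (th n)]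
  rw [hcos2] at hmono
  have hA2 : Real.cot (th n) ^ 2 * Real.sin (th n) ^ 2 = Real.cos (th n) ^ 2 := by
    rw [← hAs]; ring
  have hQP : Real.sin (th n) ^ 2 * (Real.sin ((2:ℝ)^n*ψ) * Real.cos ψ) ≤
      Real.cos (th n) ^ 2 * (Real.cos ((2:ℝ)^n*ψ) * Real.sin ψ) := by
    have hQc : Real.cos (th n) ^ 2 * (Real.cos ((2:ℝ)^n*ψ) * Real.sin ψ) =
        (Real.cos ((2:ℝ)^n*ψ) * Real.sin ψ) - Real.sin (th n) ^ 2 * (Real.cos ((2:ℝ)^n*ψ) * Real.sin ψ) := by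
      linear_combination (Real.cos ((2:ℝ)^n*ψ) * Real.sin ψ) * (Real.sin_sq_add_cos_sq (th n))
    nlinarith [hmono, hQc]
  have hfinal : Real.sin (th n) ^ 2 * (Real.cos ψ * Real.sin ((2:ℝ)^n*ψ)) ≤
      Real.sin (th n) ^ 2 * (Real.cot (th n) ^ 2 * (Real.sin ψ * Real.cos ((2:ℝ)^n*ψ))) := by
    have hA2Q : Real.sin (th n) ^ 2 * (Real.cot (th n) ^ 2 * (Real.sin ψ * Real.cos ((2:ℝ)^n*ψ))) =
        Real.cos (th n) ^ 2 * (Real.sin ψ * Real.cos ((2:ℝ)^n*ψ)) := by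
      linear_combination (Real.sin ψ * Real.cos ((2:ℝ)^n*ψ)) * hA2
    nlinarith [hQP, hA2Q]
  exact le_of_mul_le_mul_left hfinal (by positivity)

set_option maxHeartbeats 1000000 in
lemma pair_core {n : ℕ} (hn : 1 ≤ n) {w : ℝ} (hw0 : 0 ≤ w) (hwpi : w ≤ π / 2)
    (h : Real.cot (th n) * Real.cos w < Real.sin w) :
    Real.sin w * |Real.sin ((2:ℝ) ^ n * w)| ≤
      Real.cot (th n) ^ 2 * (Real.cos w * |Real.cos ((2:ℝ) ^ n * w)|) := by
  have hπ0 : 0 < π := Real.pi_pos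
  have hθpos : 0 < th n := th_pos n
  have hsθ : 0 < Real.sin (th n) := sin_th_pos hn
  have hcθ : 0 < Real.cos (th n) := cos_th_pos hn
  have hAs : Real.cot (th n) * Real.sin (th n) = Real.cos (th n) := cot_th_mul_sin n hn
  have hθhalf : th n < π / 2 := th_lt_half_pi hn
  obtain ⟨ψ, hψdef⟩ : ∃ p : ℝ, p = π / 2 - w := ⟨_, rfl⟩
  have hψ0 : 0 ≤ ψ := by rw [hψdef]; linarith
  have hψθ : ψ ≤ th n := by
    by_contra hcon
    push_neg at hcon
    have hwθ : w + th n < π / 2 := by rw [hψdef] at hcon; linarith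
    have hge : 0 ≤ Real.cos (w + th n) := by
      apply Real.cos_nonneg_of_mem_Icc
      exact ⟨by linarith, by linarith⟩
    have hcw0 : 0 ≤ Real.cos w := Real.cos_nonneg_of_mem_Icc ⟨by linarith, by linarith⟩
    have hlt : Real.cos (w + th n) < 0 := by
      rw [Real.cos_add]
      have h2 := mul_lt_mul_of_pos_right h hsθ
      have h3 : Real.cos (th n) * Real.cos w = Real.cot (th n) * Real.sin (th n) * Real.cos w := by
        rw [hAs]
      nlinarith [h2, h3]
    linarith
  have hw_eq : w = π / 2 - ψ := by rw [hψdef]; ring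
  have hsw : Real.sin w = Real.cos ψ := by rw [hw_eq, Real.sin_pi_div_two_sub]
  have hcw : Real.cos w = Real.sin ψ := by rw [hw_eq, Real.cos_pi_div_two_sub]
  have h2θ : (2:ℝ) ^ n * th n = π / 2 - th n := two_pow_mul_th hn
  have hpow : (2:ℝ) ^ n = 2 * 2 ^ (n - 1) := by
    conv_lhs => rw [show n = (n-1) + 1 by omega]
    rw [pow_succ]
    ring
  have h2nψ0 : 0 ≤ (2:ℝ) ^ n * ψ := by positivity
  have h2nψle : (2:ℝ) ^ n * ψ ≤ π / 2 - th n := by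
    rw [← h2θ]
    have h2p : (0:ℝ) < 2 ^ n := by positivity
    nlinarith
  have hshift : (2:ℝ) ^ n * w = -((2:ℝ) ^ n * ψ) + (((2:ℤ) ^ (n-1) : ℤ) : ℝ) * π := by
    push_cast
    rw [hw_eq, hpow]
    ring
  have habs_s : |Real.sin ((2:ℝ) ^ n * w)| = Real.sin ((2:ℝ) ^ n * ψ) := by
    rw [hshift, abs_sin_add_int_mul_pi, Real.sin_neg, abs_neg, abs_of_nonneg]
    exact Real.sin_nonneg_of_nonneg_of_le_pi h2nψ0 (by linarith)
  have habs_c : |Real.cos ((2:ℝ) ^ n * w)| = Real.cos ((2:ℝ) ^ n * ψ) := by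
    rw [hshift, abs_cos_add_int_mul_pi, Real.cos_neg, abs_of_nonneg]
    apply Real.cos_nonneg_of_mem_Icc
    exact ⟨by linarith, by linarith⟩
  rw [habs_s, habs_c, hsw, hcw]
  exact tan_pair hn hψ0 hψθ

set_option maxHeartbeats 1000000 in
lemma pair {n : ℕ} (hn : 1 ≤ n) (v : ℝ)
    (h : Real.cot (th n) * |Real.cos v| < |Real.sin v|) :
    |Real.sin v| * |Real.sin ((2:ℝ) ^ n * v)| ≤
      Real.cot (th n) ^ 2 * (|Real.cos v| * |Real.cos ((2:ℝ) ^ n * v)|) := by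
  have hπ0 : 0 < π := Real.pi_pos
  obtain ⟨k, hk⟩ : ∃ k : ℤ, k = round (v / π) := ⟨_, rfl⟩
  have hround : |v / π - (k:ℝ)| ≤ 1 / 2 := by rw [hk]; exact abs_sub_round (v / π)
  obtain ⟨w', hw'⟩ : ∃ x : ℝ, x = v - k * π := ⟨_, rfl⟩
  have hw'le : |w'| ≤ π / 2 := by
    have heq : w' = (v / π - k) * π := by rw [hw']; field_simp
    rw [heq, abs_mul, abs_of_pos hπ0]
    nlinarith [abs_nonneg (v / π - (k:ℝ))]
  have hw0 : (0:ℝ) ≤ |w'| := abs_nonneg _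
  have hveq : v = w' + k * π := by rw [hw']; ring
  have hs1 : |Real.sin v| = |Real.sin (|w'|)| := by
    rw [hveq, abs_sin_add_int_mul_pi, abs_sin_abs]
  have hc1 : |Real.cos v| = |Real.cos (|w'|)| := by
    rw [hveq, abs_cos_add_int_mul_pi, Real.cos_abs]
  have habs2 : (2:ℝ) ^ n * |w'| = |(2:ℝ) ^ n * w'| := by
    rw [abs_mul, abs_of_nonneg (by positivity : (0:ℝ) ≤ (2:ℝ)^n)]
  have hv2 : (2:ℝ) ^ n * v = (2:ℝ) ^ n * w' + (((2:ℤ) ^ n * k : ℤ) : ℝ) * π := by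
    push_cast
    rw [hveq]
    ring
  have hs2 : |Real.sin ((2:ℝ) ^ n * v)| = |Real.sin ((2:ℝ) ^ n * |w'|)| := by
    rw [hv2, abs_sin_add_int_mul_pi, habs2, abs_sin_abs]
  have hc2 : |Real.cos ((2:ℝ) ^ n * v)| = |Real.cos ((2:ℝ) ^ n * |w'|)| := by
    rw [hv2, abs_cos_add_int_mul_pi, habs2, Real.cos_abs]
  have hsin_nn : 0 ≤ Real.sin (|w'|) :=
    Real.sin_nonneg_of_nonneg_of_le_pi hw0 (by nlinarith)
  have hcos_nn : 0 ≤ Real.cos (|w'|) :=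
    Real.cos_nonneg_of_mem_Icc ⟨by linarith, hw'le⟩
  have hs1' : |Real.sin v| = Real.sin (|w'|) := by rw [hs1, abs_of_nonneg hsin_nn]
  have hc1' : |Real.cos v| = Real.cos (|w'|) := by rw [hc1, abs_of_nonneg hcos_nn]
  rw [hs1', hc1'] at h ⊢
  rw [hs2, hc2]
  exact pair_core hn hw0 hw'le h

set_option maxHeartbeats 1000000 in
lemma chain {n : ℕ} (hn : 1 ≤ n) (v0 : ℝ) : ∀ M : ℕ, 1 ≤ M →
    ∏ i ∈ range M, |Real.sin ((2:ℝ) ^ (n*i) * v0)| ≤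
      Real.cot (th n) ^ (M-1) * (∏ i ∈ range (M-1), |Real.cos ((2:ℝ) ^ (n*i) * v0)|) *
        max (Real.cot (th n) * |Real.cos ((2:ℝ) ^ (n*(M-1)) * v0)|)
            (|Real.sin ((2:ℝ) ^ (n*(M-1)) * v0)|) := by
  intro M hM
  induction M, hM using Nat.le_induction with
  | base =>
    simp only [Nat.sub_self, prod_range_one, pow_zero, prod_range_zero, one_mul, mul_one,
      Nat.mul_zero, pow_zero]
    exact le_max_right _ _
  | succ M hM IH =>
    have hA1 : (1:ℝ) ≤ Real.cot (th n) := one_le_cot_th hn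
    have hA0 : (0:ℝ) < Real.cot (th n) := by linarith
    have hM1 : M - 1 + 1 = M := Nat.succ_pred_eq_of_pos hM
    have hsub : M + 1 - 1 = M := by omega
    rw [hsub]
    have IH' := IH
    -- abbreviations
    have hPS_nn : (0:ℝ) ≤ ∏ i ∈ range M, |Real.sin ((2:ℝ) ^ (n*i) * v0)| :=
      Finset.prod_nonneg (fun i _ => abs_nonneg _)
    have hPC1_nn : (0:ℝ) ≤ ∏ i ∈ range (M-1), |Real.cos ((2:ℝ) ^ (n*i) * v0)| :=
      Finset.prod_nonneg (fun i _ => abs_nonneg _)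
    have hPC_nn : (0:ℝ) ≤ ∏ i ∈ range M, |Real.cos ((2:ℝ) ^ (n*i) * v0)| :=
      Finset.prod_nonneg (fun i _ => abs_nonneg _)
    have hsM_nn : (0:ℝ) ≤ |Real.sin ((2:ℝ) ^ (n*M) * v0)| := abs_nonneg _
    have hPCsplit : ∏ i ∈ range M, |Real.cos ((2:ℝ) ^ (n*i) * v0)| =
        (∏ i ∈ range (M-1), |Real.cos ((2:ℝ) ^ (n*i) * v0)|) *
          |Real.cos ((2:ℝ) ^ (n*(M-1)) * v0)| := by
      conv_lhs => rw [← hM1]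
      rw [prod_range_succ]
    rw [prod_range_succ]
    have hApow : Real.cot (th n) ^ (M-1) * Real.cot (th n) = Real.cot (th n) ^ M := by
      rw [← pow_succ, hM1]
    have hpow2n : (2:ℝ) ^ n * ((2:ℝ) ^ (n*(M-1)) * v0) = (2:ℝ) ^ (n*M) * v0 := by
      have hexp : n + n * (M - 1) = n * M := by
        conv_rhs => rw [← hM1, Nat.mul_succ]
        exact Nat.add_comm _ _
      rw [← mul_assoc, ← pow_add, hexp]
    rcases le_or_gt (|Real.sin ((2:ℝ) ^ (n*(M-1)) * v0)|)
        (Real.cot (th n) * |Real.cos ((2:ℝ) ^ (n*(M-1)) * v0)|) with hc | hc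
    · -- small case
      rw [max_eq_left hc] at IH'
      calc (∏ i ∈ range M, |Real.sin ((2:ℝ) ^ (n*i) * v0)|) * |Real.sin ((2:ℝ) ^ (n*M) * v0)|
          ≤ (Real.cot (th n) ^ (M-1) * (∏ i ∈ range (M-1), |Real.cos ((2:ℝ) ^ (n*i) * v0)|) *
              (Real.cot (th n) * |Real.cos ((2:ℝ) ^ (n*(M-1)) * v0)|)) *
              |Real.sin ((2:ℝ) ^ (n*M) * v0)| := by
            apply mul_le_mul_of_nonneg_right IH' hsM_nn
        _ = Real.cot (th n) ^ M * (∏ i ∈ range M, |Real.cos ((2:ℝ) ^ (n*i) * v0)|) *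
              |Real.sin ((2:ℝ) ^ (n*M) * v0)| := by
            rw [hPCsplit, ← hApow]; ring
        _ ≤ Real.cot (th n) ^ M * (∏ i ∈ range M, |Real.cos ((2:ℝ) ^ (n*i) * v0)|) *
              max (Real.cot (th n) * |Real.cos ((2:ℝ) ^ (n*M) * v0)|)
                  (|Real.sin ((2:ℝ) ^ (n*M) * v0)|) := by
            apply mul_le_mul_of_nonneg_left (le_max_right _ _)
            positivity
    · -- big case : use pair
      rw [max_eq_right hc.le] at IH'
      have hpair := pair hn ((2:ℝ) ^ (n*(M-1)) * v0) hc
      rw [hpow2n] at hpair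
      calc (∏ i ∈ range M, |Real.sin ((2:ℝ) ^ (n*i) * v0)|) * |Real.sin ((2:ℝ) ^ (n*M) * v0)|
          ≤ (Real.cot (th n) ^ (M-1) * (∏ i ∈ range (M-1), |Real.cos ((2:ℝ) ^ (n*i) * v0)|) *
              |Real.sin ((2:ℝ) ^ (n*(M-1)) * v0)|) * |Real.sin ((2:ℝ) ^ (n*M) * v0)| := by
            apply mul_le_mul_of_nonneg_right IH' hsM_nn
        _ = (Real.cot (th n) ^ (M-1) * (∏ i ∈ range (M-1), |Real.cos ((2:ℝ) ^ (n*i) * v0)|)) *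
              (|Real.sin ((2:ℝ) ^ (n*(M-1)) * v0)| * |Real.sin ((2:ℝ) ^ (n*M) * v0)|) := by
            ring
        _ ≤ (Real.cot (th n) ^ (M-1) * (∏ i ∈ range (M-1), |Real.cos ((2:ℝ) ^ (n*i) * v0)|)) *
              (Real.cot (th n) ^ 2 * (|Real.cos ((2:ℝ) ^ (n*(M-1)) * v0)| *
                |Real.cos ((2:ℝ) ^ (n*M) * v0)|)) := by
            apply mul_le_mul_of_nonneg_left hpair
            positivity
        _ = Real.cot (th n) ^ M * (∏ i ∈ range M, |Real.cos ((2:ℝ) ^ (n*i) * v0)|) *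
              (Real.cot (th n) * |Real.cos ((2:ℝ) ^ (n*M) * v0)|) := by
            rw [hPCsplit, ← hApow]; ring
        _ ≤ Real.cot (th n) ^ M * (∏ i ∈ range M, |Real.cos ((2:ℝ) ^ (n*i) * v0)|) *
              max (Real.cot (th n) * |Real.cos ((2:ℝ) ^ (n*M) * v0)|)
                  (|Real.sin ((2:ℝ) ^ (n*M) * v0)|) := by
            apply mul_le_mul_of_nonneg_left (le_max_left _ _)
            positivity

def Sf (n : ℕ) (v0 : ℝ) (i : ℕ) : ℝ := |Real.sin ((2:ℝ) ^ (n*i) * v0)|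
def Cf (n : ℕ) (v0 : ℝ) (i : ℕ) : ℝ := |Real.cos ((2:ℝ) ^ (n*i) * v0)|

lemma Sf_nonneg (n : ℕ) (v0 : ℝ) (i : ℕ) : 0 ≤ Sf n v0 i := abs_nonneg _
lemma Cf_nonneg (n : ℕ) (v0 : ℝ) (i : ℕ) : 0 ≤ Cf n v0 i := abs_nonneg _
lemma Sf_le_one (n : ℕ) (v0 : ℝ) (i : ℕ) : Sf n v0 i ≤ 1 := Real.abs_sin_le_one _
lemma Cf_le_one (n : ℕ) (v0 : ℝ) (i : ℕ) : Cf n v0 i ≤ 1 := Real.abs_cos_le_one _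
lemma Sf_sq_add_Cf_sq (n : ℕ) (v0 : ℝ) (i : ℕ) : Sf n v0 i ^ 2 + Cf n v0 i ^ 2 = 1 := by
  unfold Sf Cf
  rw [sq_abs, sq_abs]
  exact Real.sin_sq_add_cos_sq _

lemma pow_succ_exp (n i : ℕ) (v0 : ℝ) :
    (2:ℝ) ^ n * ((2:ℝ) ^ (n*i) * v0) = (2:ℝ) ^ (n*(i+1)) * v0 := by
  rw [← mul_assoc, ← pow_add, Nat.mul_succ]
  ring_nf

lemma pair' {n : ℕ} (hn : 1 ≤ n) (v0 : ℝ) (i : ℕ)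
    (h : Real.cot (th n) * Cf n v0 i < Sf n v0 i) :
    Sf n v0 i * Sf n v0 (i+1) ≤ Real.cot (th n) ^ 2 * (Cf n v0 i * Cf n v0 (i+1)) := by
  have := pair hn ((2:ℝ) ^ (n*i) * v0) h
  rw [pow_succ_exp] at this
  exact this

lemma Sf_shift (n : ℕ) (v0 : ℝ) (i : ℕ) : Sf n ((2:ℝ) ^ n * v0) i = Sf n v0 (i+1) := by
  unfold Sf
  rw [← mul_assoc, mul_comm ((2:ℝ)^(n*i)) ((2:ℝ)^n), ← pow_add, Nat.mul_succ]
  ring_nf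

lemma Cf_shift (n : ℕ) (v0 : ℝ) (i : ℕ) : Cf n ((2:ℝ) ^ n * v0) i = Cf n v0 (i+1) := by
  unfold Cf
  rw [← mul_assoc, mul_comm ((2:ℝ)^(n*i)) ((2:ℝ)^n), ← pow_add, Nat.mul_succ]
  ring_nf

lemma chainS {n : ℕ} (hn : 1 ≤ n) (v0 : ℝ) (M : ℕ) (hM : 1 ≤ M) :
    ∏ i ∈ range M, Sf n v0 i ≤
      Real.cot (th n) ^ (M-1) * (∏ i ∈ range (M-1), Cf n v0 i) *
        max (Real.cot (th n) * Cf n v0 (M-1)) (Sf n v0 (M-1)) := by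
  exact chain hn v0 M hM

/-- zero propagation -/
lemma Sf_zero_propagate {n : ℕ} (v0 : ℝ) {i j : ℕ} (hij : i ≤ j) (h : Sf n v0 i = 0) :
    Sf n v0 j = 0 := by
  unfold Sf at h ⊢
  rw [abs_eq_zero] at h ⊢
  have hexp : (2:ℝ) ^ (n*j) * v0 = 2 ^ (n*(j-i)) * ((2:ℝ) ^ (n*i) * v0) := by
    rw [← mul_assoc, ← pow_add]
    congr 1
    rw [← Nat.mul_add, Nat.sub_add_cancel hij]
  rw [hexp]
  exact sin_two_pow_eq_zero h _

lemma Cf_zero_next {n : ℕ} (hn : 1 ≤ n) (v0 : ℝ) {i : ℕ} (h : Cf n v0 i = 0) :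
    Sf n v0 (i+1) = 0 := by
  unfold Cf at h
  unfold Sf
  rw [abs_eq_zero] at h ⊢
  have h2 : Real.sin (2 * ((2:ℝ) ^ (n*i) * v0)) = 0 := by
    rw [Real.sin_two_mul, h]; ring
  have hgen : ∀ p : ℕ, p + n = (n-1) + 1 + p := by intro p; omega
  have hexp : (2:ℝ) ^ (n*(i+1)) * v0 = 2 ^ (n-1) * (2 * ((2:ℝ) ^ (n*i) * v0)) := by
    rw [show n*(i+1) = (n-1) + 1 + n*i from by rw [Nat.mul_succ]; exact hgen (n*i)]
    rw [pow_add, pow_succ]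
    ring
  rw [hexp]
  exact sin_two_pow_eq_zero h2 _

def Qprod (n : ℕ) (w : ℝ) (m : ℕ) : ℝ := ∏ i ∈ range m, blockP n ((2:ℝ) ^ (n*i) * w)

lemma Qprod_nonneg (n : ℕ) (w : ℝ) (m : ℕ) : 0 ≤ Qprod n w m :=
  Finset.prod_nonneg (fun i _ => blockP_nonneg n _)

set_option maxHeartbeats 1000000 in
lemma key_id {n : ℕ} (hn : 1 ≤ n) (w : ℝ) (i : ℕ) :
    (2:ℝ)^n * blockP n ((2:ℝ) ^ (n*(i+1)) * w) *
        (Sf n ((2:ℝ)^(n-1) * w) i * Cf n ((2:ℝ)^(n-1) * w) i)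
      = (Sf n ((2:ℝ)^(n-1) * w) (i+1))^2 := by
  have hgen : ∀ p : ℕ, p + n = (n-1) + 1 + p := by intro p; omega
  have bk := block_key n ((2:ℝ) ^ (n*(i+1)) * w)
  have e1 : (2:ℝ)^(n-1) * ((2:ℝ) ^ (n*(i+1)) * w) = (2:ℝ) ^ (n*(i+1)) * ((2:ℝ)^(n-1) * w) := by
    ring
  have e2 : (2:ℝ) ^ (n*(i+1)) * w = 2 * ((2:ℝ) ^ (n*i) * ((2:ℝ)^(n-1) * w)) := by
    rw [show n*(i+1) = (n-1) + 1 + n*i from by rw [Nat.mul_succ]; exact hgen (n*i)]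
    rw [pow_add, pow_succ]
    ring
  have habs : |Real.sin ((2:ℝ) ^ (n*(i+1)) * w)| =
      2 * (Sf n ((2:ℝ)^(n-1) * w) i * Cf n ((2:ℝ)^(n-1) * w) i) := by
    rw [e2, Real.sin_two_mul]
    unfold Sf Cf
    rw [abs_mul, abs_mul, abs_two]
    ring
  rw [e1, habs] at bk
  have hsq : (Sf n ((2:ℝ)^(n-1) * w) (i+1))^2 =
      Real.sin ((2:ℝ) ^ (n*(i+1)) * ((2:ℝ)^(n-1) * w)) ^ 2 := by
    unfold Sf
    exact sq_abs _
  have h2n : (2:ℝ)^n = 2^(n-1) * 2 := by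
    rw [← pow_succ]
    congr 1
    omega
  rw [hsq, ← bk, h2n]
  ring

set_option maxHeartbeats 1000000 in
lemma prod_id {n : ℕ} (hn : 1 ≤ n) (w : ℝ) : ∀ m : ℕ, 1 ≤ m →
    ((2:ℝ)^n)^(m-1) * Qprod n w m *
        ∏ i ∈ range (m-1), (Sf n ((2:ℝ)^(n-1) * w) i * Cf n ((2:ℝ)^(n-1) * w) i)
      = blockP n w * ∏ i ∈ range (m-1), (Sf n ((2:ℝ)^(n-1) * w) (i+1))^2 := by
  intro m hm
  induction m, hm using Nat.le_induction with
  | base =>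
    simp only [Nat.sub_self, pow_zero, prod_range_zero, one_mul, mul_one]
    unfold Qprod
    rw [prod_range_one, Nat.mul_zero, pow_zero, one_mul]
  | succ m hm IH =>
    have hM1 : m - 1 + 1 = m := Nat.succ_pred_eq_of_pos hm
    have hsub : m + 1 - 1 = m := by omega
    rw [hsub]
    have key := key_id hn w (m-1)
    rw [hM1] at key
    have hQsplit : Qprod n w (m+1) = Qprod n w m * blockP n ((2:ℝ) ^ (n*m) * w) := by
      unfold Qprod
      rw [prod_range_succ]
    have hSCsplit : ∏ i ∈ range m, (Sf n ((2:ℝ)^(n-1) * w) i * Cf n ((2:ℝ)^(n-1) * w) i) =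
        (∏ i ∈ range (m-1), (Sf n ((2:ℝ)^(n-1) * w) i * Cf n ((2:ℝ)^(n-1) * w) i)) *
          (Sf n ((2:ℝ)^(n-1) * w) (m-1) * Cf n ((2:ℝ)^(n-1) * w) (m-1)) := by
      conv_lhs => rw [← hM1]
      rw [prod_range_succ]
    have hS2split : ∏ i ∈ range m, (Sf n ((2:ℝ)^(n-1) * w) (i+1))^2 =
        (∏ i ∈ range (m-1), (Sf n ((2:ℝ)^(n-1) * w) (i+1))^2) *
          (Sf n ((2:ℝ)^(n-1) * w) m)^2 := by
      conv_lhs => rw [← hM1]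
      rw [prod_range_succ, hM1]
    have hpowsplit : ((2:ℝ)^n)^m = ((2:ℝ)^n)^(m-1) * (2:ℝ)^n := by
      rw [← pow_succ, hM1]
    calc ((2:ℝ)^n)^m * Qprod n w (m+1) *
          ∏ i ∈ range m, (Sf n ((2:ℝ)^(n-1) * w) i * Cf n ((2:ℝ)^(n-1) * w) i)
        = (((2:ℝ)^n)^(m-1) * Qprod n w m *
            ∏ i ∈ range (m-1), (Sf n ((2:ℝ)^(n-1) * w) i * Cf n ((2:ℝ)^(n-1) * w) i)) *
          ((2:ℝ)^n * blockP n ((2:ℝ) ^ (n*m) * w) *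
            (Sf n ((2:ℝ)^(n-1) * w) (m-1) * Cf n ((2:ℝ)^(n-1) * w) (m-1))) := by
          rw [hQsplit, hSCsplit, hpowsplit]; ring
      _ = (blockP n w * ∏ i ∈ range (m-1), (Sf n ((2:ℝ)^(n-1) * w) (i+1))^2) *
            (Sf n ((2:ℝ)^(n-1) * w) m)^2 := by rw [IH, key]
      _ = blockP n w * ∏ i ∈ range m, (Sf n ((2:ℝ)^(n-1) * w) (i+1))^2 := by
          rw [hS2split]; ring

lemma scale_up {X c : ℝ} (hX : 0 ≤ X) (hc : 1 ≤ c) : X ≤ c * X := by nlinarith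

set_option maxHeartbeats 1000000 in
lemma sf_half {n : ℕ} (v0 : ℝ) (hc0 : Cf n v0 0 < 1/2) : 1/2 ≤ Sf n v0 0 := by
  have hp := Sf_sq_add_Cf_sq n v0 0
  have h1 := Sf_nonneg n v0 0
  have h2 := Cf_nonneg n v0 0
  nlinarith

set_option maxHeartbeats 1000000 in
lemma maxbound {n : ℕ} (hn : 1 ≤ n) (v0 : ℝ) (K : ℕ) :
    max (Real.cot (th n) * Cf n v0 (K+1)) (Sf n v0 (K+1)) * Sf n v0 (K+2) ^ 2 ≤
      Real.cot (th n) ^ 2 * Cf n v0 (K+1) := by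
  have hA1 : (1:ℝ) ≤ Real.cot (th n) := one_le_cot_th hn
  have hA0 : (0:ℝ) ≤ Real.cot (th n) := by linarith
  have hs1 := Sf_nonneg n v0 (K+1); have hs2 := Sf_nonneg n v0 (K+2)
  have hc1 := Cf_nonneg n v0 (K+1); have hc2 := Cf_nonneg n v0 (K+2)
  have hs1' := Sf_le_one n v0 (K+1); have hs2' := Sf_le_one n v0 (K+2)
  have hc1' := Cf_le_one n v0 (K+1); have hc2' := Cf_le_one n v0 (K+2)
  have hs2sq : Sf n v0 (K+2)^2 ≤ 1 := by nlinarith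
  rcases le_or_gt (Sf n v0 (K+1)) (Real.cot (th n) * Cf n v0 (K+1)) with hc | hc
  · rw [max_eq_left hc]
    have h1 : 0 ≤ Real.cot (th n) * (Cf n v0 (K+1) * (1 - Sf n v0 (K+2)^2)) :=
      mul_nonneg hA0 (mul_nonneg hc1 (by linarith))
    have h2 : 0 ≤ (Real.cot (th n) * (Real.cot (th n) - 1)) * Cf n v0 (K+1) :=
      mul_nonneg (mul_nonneg hA0 (by linarith)) hc1
    nlinarith [h1, h2]
  · rw [max_eq_right hc.le]
    have hp := pair' hn v0 (K+1) hc
    have h1 : Sf n v0 (K+1) * Sf n v0 (K+2) ^ 2 ≤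
        Real.cot (th n) ^ 2 * (Cf n v0 (K+1) * Cf n v0 (K+2)) * Sf n v0 (K+2) := by
      nlinarith [mul_le_mul_of_nonneg_right hp hs2]
    have h2 : Real.cot (th n) ^ 2 * (Cf n v0 (K+1) * Cf n v0 (K+2)) * Sf n v0 (K+2) ≤
        Real.cot (th n) ^ 2 * Cf n v0 (K+1) := by
      have h3 : Cf n v0 (K+2) * Sf n v0 (K+2) ≤ 1 := mul_le_one₀ hc2' hs2 hs2'
      have h4 : 0 ≤ Real.cot (th n) ^ 2 * Cf n v0 (K+1) :=
        mul_nonneg (sq_nonneg _) hc1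
      nlinarith [mul_le_mul_of_nonneg_left h3 h4]
    linarith

set_option maxHeartbeats 1000000 in
lemma core {n : ℕ} (hn : 1 ≤ n) (v0 : ℝ) (m : ℕ) (hm : 1 ≤ m) :
    Sf n v0 0 * ∏ i ∈ range (m-1), (Sf n v0 (i+1))^2 ≤
      4 * Real.cot (th n) ^ m * ∏ i ∈ range (m-1), (Sf n v0 i * Cf n v0 i) := by
  have hA1 : (1:ℝ) ≤ Real.cot (th n) := one_le_cot_th hn
  have hA0 : (0:ℝ) < Real.cot (th n) := by linarith
  match m, hm with
  | 1, _ =>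
    simp only [Nat.sub_self, prod_range_zero, mul_one]
    have := Sf_le_one n v0 0
    nlinarith [Sf_nonneg n v0 0]
  | 2, _ =>
    simp only [show (2:ℕ) - 1 = 1 from rfl, prod_range_one, zero_add]
    have hs0 := Sf_nonneg n v0 0; have hs1 := Sf_nonneg n v0 1
    have hc0 := Cf_nonneg n v0 0; have hc1 := Cf_nonneg n v0 1
    have hs0' := Sf_le_one n v0 0; have hs1' := Sf_le_one n v0 1
    have hc1' := Cf_le_one n v0 1
    have hsq1 : (0:ℝ) ≤ 1 - Sf n v0 1^2 := by nlinarith [hs1, hs1']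
    have ht1 : 0 ≤ Sf n v0 0 * (1 - Sf n v0 1^2) := mul_nonneg hs0 hsq1
    rcases le_or_gt (1/2 : ℝ) (Cf n v0 0) with hhalf | hhalf
    · have ht2 : 0 ≤ (Real.cot (th n)^2 - 1) * (Sf n v0 0 * Cf n v0 0) := by
        have : (1:ℝ) ≤ Real.cot (th n)^2 := by nlinarith
        exact mul_nonneg (by linarith) (mul_nonneg hs0 hc0)
      have ht3 : 0 ≤ Sf n v0 0 * (Cf n v0 0 - 1/2) := mul_nonneg hs0 (by linarith)
      nlinarith [ht1, ht2, ht3]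
    · have hS0 : 1/2 ≤ Sf n v0 0 := sf_half v0 hhalf
      rcases le_or_gt (Sf n v0 0) (Real.cot (th n) * Cf n v0 0) with hP | hP
      · have hk1 : 0 ≤ Real.cot (th n) * Sf n v0 0 * (Real.cot (th n) * Cf n v0 0 - Sf n v0 0) :=
          mul_nonneg (mul_nonneg hA0.le hs0) (by linarith)
        have hk2 : 0 ≤ Sf n v0 0 * (Sf n v0 0 - 1/2) := mul_nonneg hs0 (by linarith)
        have hk4 : 0 ≤ Sf n v0 0 ^ 2 * (Real.cot (th n) - 1) :=
          mul_nonneg (sq_nonneg _) (by linarith)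
        nlinarith [hk1, hk2, hk4, ht1]
      · have hp := pair' hn v0 0 hP
        have h1 : Sf n v0 0 * Sf n v0 1 ^ 2 ≤
            Real.cot (th n)^2 * (Cf n v0 0 * Cf n v0 1) * Sf n v0 1 := by
          nlinarith [mul_le_mul_of_nonneg_right hp hs1]
        have h2 : Real.cot (th n)^2 * (Cf n v0 0 * Cf n v0 1) * Sf n v0 1 ≤
            Real.cot (th n)^2 * Cf n v0 0 := by
          have h3 : Cf n v0 1 * Sf n v0 1 ≤ 1 := mul_le_one₀ hc1' hs1 hs1'
          have h4 : 0 ≤ Real.cot (th n) ^ 2 * Cf n v0 0 := mul_nonneg (sq_nonneg _) hc0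
          nlinarith [mul_le_mul_of_nonneg_left h3 h4]
        have h3 : Real.cot (th n)^2 * Cf n v0 0 ≤
            4 * Real.cot (th n)^2 * (Sf n v0 0 * Cf n v0 0) := by
          have h5 : 0 ≤ Real.cot (th n)^2 * Cf n v0 0 := mul_nonneg (sq_nonneg _) hc0
          nlinarith [mul_le_mul_of_nonneg_left (by linarith : (1:ℝ) ≤ 4 * Sf n v0 0) h5]
        linarith
  | (K+3), _ =>
    have hs0 := Sf_nonneg n v0 0
    have hc0 := Cf_nonneg n v0 0
    have hG : (0:ℝ) ≤ ∏ i ∈ range (K+1), Sf n v0 (i+1) :=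
      Finset.prod_nonneg (fun i _ => Sf_nonneg n v0 _)
    have hPC : (0:ℝ) ≤ ∏ i ∈ range K, Cf n v0 (i+1) :=
      Finset.prod_nonneg (fun i _ => Cf_nonneg n v0 _)
    have hc1 := Cf_nonneg n v0 (K+1)
    have hmb := maxbound hn v0 K
    have chain1 := chainS hn ((2:ℝ)^n * v0) (K+1) (by omega)
    simp only [Sf_shift, Cf_shift, Nat.add_sub_cancel] at chain1
    have chain2 := chainS hn v0 (K+2) (by omega)
    simp only [show K+2-1 = K+1 from rfl] at chain2
    have hsplit2 : ∏ i ∈ range (K+2), Sf n v0 i =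
        (∏ i ∈ range (K+1), Sf n v0 (i+1)) * Sf n v0 0 := prod_range_succ' _ _
    have hsplitC : ∏ i ∈ range (K+1), Cf n v0 i =
        (∏ i ∈ range K, Cf n v0 (i+1)) * Cf n v0 0 := prod_range_succ' _ _
    have hsplitH : ∏ i ∈ range (K+1), Cf n v0 (i+1) =
        (∏ i ∈ range K, Cf n v0 (i+1)) * Cf n v0 (K+1) := prod_range_succ _ _
    have hApK2 : Real.cot (th n)^(K+2) = Real.cot (th n)^K * Real.cot (th n)^2 :=
      pow_add _ K 2
    have hApK3 : Real.cot (th n)^(K+3) = Real.cot (th n)^(K+1) * Real.cot (th n)^2 :=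
      pow_add _ (K+1) 2
    have hApK3' : Real.cot (th n)^(K+3) = Real.cot (th n)^(K+2) * Real.cot (th n) :=
      pow_succ _ (K+2)
    have hZ : Sf n v0 0 * (∏ i ∈ range (K+1), Sf n v0 (i+1)) * Sf n v0 (K+2)^2 ≤
        4 * Real.cot (th n)^(K+3) * (Sf n v0 0 * Cf n v0 0) *
          ∏ i ∈ range (K+1), Cf n v0 (i+1) := by
      rcases le_or_gt (1/2 : ℝ) (Cf n v0 0) with hhalf | hhalf
      · have step1 : Sf n v0 0 * (∏ i ∈ range (K+1), Sf n v0 (i+1)) * Sf n v0 (K+2)^2 ≤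
            Sf n v0 0 * (Real.cot (th n)^K * (∏ i ∈ range K, Cf n v0 (i+1)) *
              max (Real.cot (th n) * Cf n v0 (K+1)) (Sf n v0 (K+1))) * Sf n v0 (K+2)^2 :=
          mul_le_mul_of_nonneg_right (mul_le_mul_of_nonneg_left chain1 hs0) (sq_nonneg _)
        have hfac1 : (0:ℝ) ≤ Sf n v0 0 * (Real.cot (th n)^K * ∏ i ∈ range K, Cf n v0 (i+1)) :=
          mul_nonneg hs0 (mul_nonneg (pow_nonneg hA0.le _) hPC)
        have step2 : Sf n v0 0 * (Real.cot (th n)^K * (∏ i ∈ range K, Cf n v0 (i+1)) *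
              max (Real.cot (th n) * Cf n v0 (K+1)) (Sf n v0 (K+1))) * Sf n v0 (K+2)^2 ≤
            Sf n v0 0 * (Real.cot (th n)^K * ∏ i ∈ range K, Cf n v0 (i+1)) *
              (Real.cot (th n)^2 * Cf n v0 (K+1)) := by
          calc Sf n v0 0 * (Real.cot (th n)^K * (∏ i ∈ range K, Cf n v0 (i+1)) *
              max (Real.cot (th n) * Cf n v0 (K+1)) (Sf n v0 (K+1))) * Sf n v0 (K+2)^2
              = Sf n v0 0 * (Real.cot (th n)^K * ∏ i ∈ range K, Cf n v0 (i+1)) *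
                (max (Real.cot (th n) * Cf n v0 (K+1)) (Sf n v0 (K+1)) * Sf n v0 (K+2)^2) := by
                ring
            _ ≤ _ := mul_le_mul_of_nonneg_left hmb hfac1
        have hX : (0:ℝ) ≤ Real.cot (th n)^(K+2) *
            (Sf n v0 0 * ((∏ i ∈ range K, Cf n v0 (i+1)) * Cf n v0 (K+1))) :=
          mul_nonneg (pow_nonneg hA0.le _) (mul_nonneg hs0 (mul_nonneg hPC hc1))
        have h4A : (1:ℝ) ≤ 4 * Real.cot (th n) * Cf n v0 0 := by nlinarith
        have step3 : Sf n v0 0 * (Real.cot (th n)^K * ∏ i ∈ range K, Cf n v0 (i+1)) *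
              (Real.cot (th n)^2 * Cf n v0 (K+1)) ≤
            4 * Real.cot (th n)^(K+3) * (Sf n v0 0 * Cf n v0 0) *
              ∏ i ∈ range (K+1), Cf n v0 (i+1) := by
          rw [hsplitH]
          calc Sf n v0 0 * (Real.cot (th n)^K * ∏ i ∈ range K, Cf n v0 (i+1)) *
                (Real.cot (th n)^2 * Cf n v0 (K+1))
              = Real.cot (th n)^(K+2) *
                (Sf n v0 0 * ((∏ i ∈ range K, Cf n v0 (i+1)) * Cf n v0 (K+1))) := by
                rw [hApK2]; ring
            _ ≤ (4 * Real.cot (th n) * Cf n v0 0) * (Real.cot (th n)^(K+2) *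
                (Sf n v0 0 * ((∏ i ∈ range K, Cf n v0 (i+1)) * Cf n v0 (K+1)))) :=
                scale_up hX h4A
            _ = 4 * Real.cot (th n)^(K+3) * (Sf n v0 0 * Cf n v0 0) *
                ((∏ i ∈ range K, Cf n v0 (i+1)) * Cf n v0 (K+1)) := by
                rw [hApK3']; ring
        linarith
      · have hS0 : 1/2 ≤ Sf n v0 0 := sf_half v0 hhalf
        rw [hsplit2, hsplitC] at chain2
        have step1 : Sf n v0 0 * (∏ i ∈ range (K+1), Sf n v0 (i+1)) * Sf n v0 (K+2)^2 ≤
            Real.cot (th n)^(K+1) * ((∏ i ∈ range K, Cf n v0 (i+1)) * Cf n v0 0) *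
              max (Real.cot (th n) * Cf n v0 (K+1)) (Sf n v0 (K+1)) * Sf n v0 (K+2)^2 := by
          apply mul_le_mul_of_nonneg_right _ (sq_nonneg _)
          calc Sf n v0 0 * ∏ i ∈ range (K+1), Sf n v0 (i+1)
              = (∏ i ∈ range (K+1), Sf n v0 (i+1)) * Sf n v0 0 := by ring
            _ ≤ _ := chain2
        have hfac2 : (0:ℝ) ≤ Real.cot (th n)^(K+1) *
            ((∏ i ∈ range K, Cf n v0 (i+1)) * Cf n v0 0) :=
          mul_nonneg (pow_nonneg hA0.le _) (mul_nonneg hPC hc0)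
        have step2 : Real.cot (th n)^(K+1) * ((∏ i ∈ range K, Cf n v0 (i+1)) * Cf n v0 0) *
              max (Real.cot (th n) * Cf n v0 (K+1)) (Sf n v0 (K+1)) * Sf n v0 (K+2)^2 ≤
            Real.cot (th n)^(K+1) * ((∏ i ∈ range K, Cf n v0 (i+1)) * Cf n v0 0) *
              (Real.cot (th n)^2 * Cf n v0 (K+1)) := by
          calc Real.cot (th n)^(K+1) * ((∏ i ∈ range K, Cf n v0 (i+1)) * Cf n v0 0) *
              max (Real.cot (th n) * Cf n v0 (K+1)) (Sf n v0 (K+1)) * Sf n v0 (K+2)^2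
              = Real.cot (th n)^(K+1) * ((∏ i ∈ range K, Cf n v0 (i+1)) * Cf n v0 0) *
                (max (Real.cot (th n) * Cf n v0 (K+1)) (Sf n v0 (K+1)) * Sf n v0 (K+2)^2) := by
                ring
            _ ≤ _ := mul_le_mul_of_nonneg_left hmb hfac2
        have hX2 : (0:ℝ) ≤ Real.cot (th n)^(K+3) *
            (Cf n v0 0 * ((∏ i ∈ range K, Cf n v0 (i+1)) * Cf n v0 (K+1))) :=
          mul_nonneg (pow_nonneg hA0.le _) (mul_nonneg hc0 (mul_nonneg hPC hc1))
        have h4S : (1:ℝ) ≤ 4 * Sf n v0 0 := by linarith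
        have step3 : Real.cot (th n)^(K+1) * ((∏ i ∈ range K, Cf n v0 (i+1)) * Cf n v0 0) *
              (Real.cot (th n)^2 * Cf n v0 (K+1)) ≤
            4 * Real.cot (th n)^(K+3) * (Sf n v0 0 * Cf n v0 0) *
              ∏ i ∈ range (K+1), Cf n v0 (i+1) := by
          rw [hsplitH]
          calc Real.cot (th n)^(K+1) * ((∏ i ∈ range K, Cf n v0 (i+1)) * Cf n v0 0) *
                (Real.cot (th n)^2 * Cf n v0 (K+1))
              = Real.cot (th n)^(K+3) *
                (Cf n v0 0 * ((∏ i ∈ range K, Cf n v0 (i+1)) * Cf n v0 (K+1))) := by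
                rw [hApK3]; ring
            _ ≤ (4 * Sf n v0 0) * (Real.cot (th n)^(K+3) *
                (Cf n v0 0 * ((∏ i ∈ range K, Cf n v0 (i+1)) * Cf n v0 (K+1)))) :=
                scale_up hX2 h4S
            _ = 4 * Real.cot (th n)^(K+3) * (Sf n v0 0 * Cf n v0 0) *
                ((∏ i ∈ range K, Cf n v0 (i+1)) * Cf n v0 (K+1)) := by
                ring
        linarith
    have hsplitL : ∏ i ∈ range (K+2), (Sf n v0 (i+1))^2 =
        (∏ i ∈ range (K+1), (Sf n v0 (i+1))^2) * (Sf n v0 (K+2))^2 := prod_range_succ _ _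
    have hsq : ∏ i ∈ range (K+1), (Sf n v0 (i+1))^2 =
        (∏ i ∈ range (K+1), Sf n v0 (i+1))^2 := by
      rw [← Finset.prod_pow]
    have hsplitR : ∏ i ∈ range (K+2), (Sf n v0 i * Cf n v0 i) =
        (∏ i ∈ range (K+1), (Sf n v0 (i+1) * Cf n v0 (i+1))) * (Sf n v0 0 * Cf n v0 0) :=
      prod_range_succ' _ _
    have hGH : ∏ i ∈ range (K+1), (Sf n v0 (i+1) * Cf n v0 (i+1)) =
        (∏ i ∈ range (K+1), Sf n v0 (i+1)) * (∏ i ∈ range (K+1), Cf n v0 (i+1)) :=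
      Finset.prod_mul_distrib
    have hfin := mul_le_mul_of_nonneg_left hZ hG
    calc Sf n v0 0 * ∏ i ∈ range (K+3-1), (Sf n v0 (i+1))^2
        = (∏ i ∈ range (K+1), Sf n v0 (i+1)) *
            (Sf n v0 0 * (∏ i ∈ range (K+1), Sf n v0 (i+1)) * Sf n v0 (K+2)^2) := by
          rw [show K+3-1 = K+2 from rfl, hsplitL, hsq]; ring
      _ ≤ (∏ i ∈ range (K+1), Sf n v0 (i+1)) *
            (4 * Real.cot (th n)^(K+3) * (Sf n v0 0 * Cf n v0 0) *
              ∏ i ∈ range (K+1), Cf n v0 (i+1)) := hfin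
      _ = 4 * Real.cot (th n)^(K+3) * ∏ i ∈ range (K+3-1), (Sf n v0 i * Cf n v0 i) := by
          rw [show K+3-1 = K+2 from rfl, hsplitR, hGH]; ring

set_option maxHeartbeats 1000000 in
lemma main_bound {n : ℕ} (hn : 1 ≤ n) (w : ℝ) (m : ℕ) (hm : 1 ≤ m)
    (hnd : ∀ i, i < m - 1 →
      Sf n ((2:ℝ)^(n-1) * w) i ≠ 0 ∧ Cf n ((2:ℝ)^(n-1) * w) i ≠ 0) :
    Qprod n w m * ((2:ℝ)^n)^(m-1) ≤ 4 * Real.cot (th n)^m := by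
  have hid := prod_id hn w m hm
  have hP : 0 < ∏ i ∈ range (m-1), (Sf n ((2:ℝ)^(n-1) * w) i * Cf n ((2:ℝ)^(n-1) * w) i) := by
    apply Finset.prod_pos
    intro i hi
    obtain ⟨h1, h2⟩ := hnd i (mem_range.1 hi)
    have := Sf_nonneg n ((2:ℝ)^(n-1) * w) i
    have := Cf_nonneg n ((2:ℝ)^(n-1) * w) i
    apply mul_pos <;> [exact lt_of_le_of_ne ‹_› (Ne.symm h1); exact lt_of_le_of_ne ‹_› (Ne.symm h2)]
  have hS2nn : (0:ℝ) ≤ ∏ i ∈ range (m-1), (Sf n ((2:ℝ)^(n-1) * w) (i+1))^2 :=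
    Finset.prod_nonneg (fun i _ => sq_nonneg _)
  have hb0 : blockP n w ≤ Sf n ((2:ℝ)^(n-1) * w) 0 := by
    have h := blockP_le_sin n w
    have e : Sf n ((2:ℝ)^(n-1) * w) 0 = |Real.sin ((2:ℝ)^(n-1) * w)| := by
      unfold Sf
      rw [Nat.mul_zero, pow_zero, one_mul]
    rw [e]
    exact h
  have hcore := core hn ((2:ℝ)^(n-1) * w) m hm
  have hstep : (Qprod n w m * ((2:ℝ)^n)^(m-1)) *
      (∏ i ∈ range (m-1), (Sf n ((2:ℝ)^(n-1) * w) i * Cf n ((2:ℝ)^(n-1) * w) i)) ≤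
      (4 * Real.cot (th n)^m) *
      (∏ i ∈ range (m-1), (Sf n ((2:ℝ)^(n-1) * w) i * Cf n ((2:ℝ)^(n-1) * w) i)) := by
    calc (Qprod n w m * ((2:ℝ)^n)^(m-1)) *
        (∏ i ∈ range (m-1), (Sf n ((2:ℝ)^(n-1) * w) i * Cf n ((2:ℝ)^(n-1) * w) i))
        = ((2:ℝ)^n)^(m-1) * Qprod n w m *
          ∏ i ∈ range (m-1), (Sf n ((2:ℝ)^(n-1) * w) i * Cf n ((2:ℝ)^(n-1) * w) i) := by ring
      _ = blockP n w * ∏ i ∈ range (m-1), (Sf n ((2:ℝ)^(n-1) * w) (i+1))^2 := hid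
      _ ≤ Sf n ((2:ℝ)^(n-1) * w) 0 * ∏ i ∈ range (m-1), (Sf n ((2:ℝ)^(n-1) * w) (i+1))^2 :=
          mul_le_mul_of_nonneg_right hb0 hS2nn
      _ ≤ 4 * Real.cot (th n)^m *
          ∏ i ∈ range (m-1), (Sf n ((2:ℝ)^(n-1) * w) i * Cf n ((2:ℝ)^(n-1) * w) i) := hcore
  exact le_of_mul_le_mul_right hstep hP

set_option maxHeartbeats 1000000 in
lemma Qbound {n : ℕ} (hn : 1 ≤ n) (w : ℝ) (m : ℕ) :
    Qprod n w m * ((2:ℝ)^n)^m ≤ (2:ℝ)^(n+2) * Real.cot (th n)^m := by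
  have hA0 : (0:ℝ) < Real.cot (th n) := cot_th_pos hn
  rcases Nat.eq_zero_or_pos m with rfl | hm
  · simp only [Qprod, prod_range_zero, pow_zero, one_mul, mul_one]
    calc (1:ℝ) = 1^(n+2) := (one_pow _).symm
      _ ≤ 2^(n+2) := pow_le_pow_left₀ (by norm_num) (by norm_num) _
  · by_cases hnd : ∀ i, i < m - 1 →
        Sf n ((2:ℝ)^(n-1) * w) i ≠ 0 ∧ Cf n ((2:ℝ)^(n-1) * w) i ≠ 0
    · have h1 := main_bound hn w m hm hnd
      have hM1 : m - 1 + 1 = m := Nat.succ_pred_eq_of_pos hm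
      have hps : ((2:ℝ)^n)^m = ((2:ℝ)^n)^(m-1) * (2:ℝ)^n := by rw [← pow_succ, hM1]
      have h2n : (0:ℝ) < (2:ℝ)^n := by positivity
      have e : (2:ℝ)^(n+2) = (2:ℝ)^n * 4 := by rw [pow_add]; norm_num
      calc Qprod n w m * ((2:ℝ)^n)^m
          = (Qprod n w m * ((2:ℝ)^n)^(m-1)) * (2:ℝ)^n := by rw [hps]; ring
        _ ≤ (4 * Real.cot (th n)^m) * (2:ℝ)^n := mul_le_mul_of_nonneg_right h1 h2n.le
        _ = (2:ℝ)^(n+2) * Real.cot (th n)^m := by rw [e]; ring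
    · push_neg at hnd
      obtain ⟨i, hi, hzero⟩ := hnd
      have hSm : Sf n ((2:ℝ)^(n-1) * w) (m-1) = 0 := by
        rcases eq_or_ne (Sf n ((2:ℝ)^(n-1) * w) i) 0 with hS | hS
        · exact Sf_zero_propagate _ (by omega) hS
        · have hC := hzero hS
          have h2 := Cf_zero_next hn _ hC
          exact Sf_zero_propagate _ (by omega) h2
      have hM1 : m - 1 + 1 = m := Nat.succ_pred_eq_of_pos hm
      have hQ : Qprod n w m ≤ 0 := by
        have hsplit : Qprod n w m = Qprod n w (m-1) * blockP n ((2:ℝ)^(n*(m-1)) * w) := by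
          unfold Qprod
          conv_lhs => rw [← hM1]
          rw [prod_range_succ]
        have hle1 : Qprod n w (m-1) ≤ 1 :=
          Finset.prod_le_one (fun j _ => blockP_nonneg n _) (fun j _ => blockP_le_one n _)
        have hbs : blockP n ((2:ℝ)^(n*(m-1)) * w) ≤ Sf n ((2:ℝ)^(n-1) * w) (m-1) := by
          have h := blockP_le_sin n ((2:ℝ)^(n*(m-1)) * w)
          have e : (2:ℝ)^(n-1) * ((2:ℝ)^(n*(m-1)) * w) =
              (2:ℝ)^(n*(m-1)) * ((2:ℝ)^(n-1) * w) := by ring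
          have e2 : Sf n ((2:ℝ)^(n-1) * w) (m-1) =
              |Real.sin ((2:ℝ)^(n-1) * ((2:ℝ)^(n*(m-1)) * w))| := by
            unfold Sf
            rw [e]
          rw [e2]
          exact h
        calc Qprod n w m = Qprod n w (m-1) * blockP n ((2:ℝ)^(n*(m-1)) * w) := hsplit
          _ ≤ 1 * blockP n ((2:ℝ)^(n*(m-1)) * w) :=
              mul_le_mul_of_nonneg_right hle1 (blockP_nonneg n _)
          _ = blockP n ((2:ℝ)^(n*(m-1)) * w) := one_mul _
          _ ≤ Sf n ((2:ℝ)^(n-1) * w) (m-1) := hbs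
          _ = 0 := hSm
      have hle0 : Qprod n w m * ((2:ℝ)^n)^m ≤ 0 :=
        mul_nonpos_of_nonpos_of_nonneg hQ (by positivity)
      have hRHS : (0:ℝ) ≤ (2:ℝ)^(n+2) * Real.cot (th n)^m := by positivity
      linarith

lemma exists_shift (n : ℕ) (hn : 1 ≤ n) (l : ℕ) : ∃ d : ℕ, d < n ∧ n ∣ (d + l) := by
  induction l with
  | zero => exact ⟨0, by omega, by simp⟩
  | succ l ih =>
    obtain ⟨d, hd, hdvd⟩ := ih
    rcases Nat.eq_zero_or_pos d with rfl | hdpos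
    · refine ⟨n - 1, by omega, ?_⟩
      have he : n - 1 + (l + 1) = n + l := by omega
      rw [he]
      exact Nat.dvd_add dvd_rfl (by simpa using hdvd)
    · refine ⟨d - 1, by omega, ?_⟩
      have he : d - 1 + (l + 1) = d + l := by omega
      rw [he]
      exact hdvd

set_option maxHeartbeats 1000000 in
lemma prod_eq_Q {n : ℕ} (hn : 1 ≤ n) (α : ℝ) (l d : ℕ) (hdvd : n ∣ (d + l)) (m : ℕ) :
    ∏ j ∈ Ico (d+1) (d+1+n*m),
        |Real.cos (2 ^ j * α * π + (pert n (j + l) : ℝ) * π / 2)|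
      = Qprod n ((2:ℝ)^(d+1) * (α * π)) m := by
  induction m with
  | zero =>
    simp [Qprod]
  | succ m ih =>
    have hb1 : d + 1 ≤ d + 1 + n*m := by omega
    have hb2 : d + 1 + n*m ≤ d + 1 + n*(m+1) := by
      have : n*(m+1) = n*m + n := Nat.mul_succ n m
      omega
    rw [← Finset.prod_Ico_consecutive _ hb1 hb2, ih]
    have hQs : Qprod n ((2:ℝ)^(d+1) * (α * π)) (m+1) =
        Qprod n ((2:ℝ)^(d+1) * (α * π)) m *
          blockP n ((2:ℝ)^(n*m) * ((2:ℝ)^(d+1) * (α * π))) := by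
      unfold Qprod
      rw [prod_range_succ]
    rw [hQs]
    congr 1
    -- second block
    have he : d + 1 + n*(m+1) = (d + 1 + n*m) + n := by
      have : n*(m+1) = n*m + n := Nat.mul_succ n m
      omega
    rw [he, Finset.prod_Ico_eq_prod_range]
    have he2 : d + 1 + n*m + n - (d + 1 + n*m) = n := by omega
    rw [he2]
    have hN1 : n - 1 + 1 = n := Nat.succ_pred_eq_of_pos hn
    conv_lhs => rw [← hN1]
    rw [prod_range_succ, hN1]
    unfold blockP
    congr 1
    · -- cos factors
      apply Finset.prod_congr rfl
      intro q hq
      have hq' : q < n - 1 := mem_range.1 hq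
      have hnotdvd : ¬ n ∣ (d + 1 + n*m + q + l) := by
        intro hdd
        have h1 : n ∣ (d + l) + n*m := Nat.dvd_add hdvd (Dvd.intro m rfl)
        have heq : d + 1 + n*m + q + l = ((d + l) + n*m) + (1 + q) := by ring
        rw [heq] at hdd
        have h2 : n ∣ (1 + q) := (Nat.dvd_add_right h1).mp hdd
        have h3 : n ≤ 1 + q := Nat.le_of_dvd (by omega) h2
        omega
      have hpert : pert n (d + 1 + n*m + q + l) = 0 := by
        unfold pert
        rw [if_neg hnotdvd]
      rw [hpert]
      have hangle : (2:ℝ) ^ (d + 1 + n*m + q) * α * π =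
          2 ^ q * ((2:ℝ)^(n*m) * ((2:ℝ)^(d+1) * (α * π))) := by
        rw [pow_add, pow_add]
        ring
      rw [Nat.cast_zero, zero_mul, zero_div, add_zero, hangle]
    · -- sin factor
      have hdd : n ∣ (d + 1 + n*m + (n-1) + l) := by
        have h1 : n ∣ (d + l) + n*m := Nat.dvd_add hdvd (Dvd.intro m rfl)
        have heq : d + 1 + n*m + (n-1) + l = ((d + l) + n*m) + (1 + (n-1)) := by ring
        have hone : 1 + (n-1) = n := by omega
        rw [heq, hone]
        exact Nat.dvd_add h1 dvd_rfl
      have hpert : pert n (d + 1 + n*m + (n-1) + l) = 1 := by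
        unfold pert
        rw [if_pos hdd]
      rw [hpert]
      have hangle : (2:ℝ) ^ (d + 1 + n*m + (n-1)) * α * π =
          2 ^ (n-1) * ((2:ℝ)^(n*m) * ((2:ℝ)^(d+1) * (α * π))) := by
        rw [pow_add, pow_add]
        ring
      rw [Nat.cast_one, one_mul, hangle, Real.cos_add_pi_div_two, abs_neg]

end EvilAux

set_option maxHeartbeats 1000000 in
/-- Theorem 3.1, first part: for all `α ∈ [0,1]`, `r ≥ 1` and shifts `ℓ`,
`Π_{r,c^{(ℓ)}}(α) ≤ C(n)·2^{-r}·(cot(π/(2(2^n+1))))^{r/n}`. -/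
theorem PiProd_le_cot_pow (n : ℕ) (hn : 1 ≤ n) :
    ∃ C > (0:ℝ), ∀ α ∈ Set.Icc (0:ℝ) 1, ∀ r : ℕ, 1 ≤ r → ∀ l : ℕ,
      PiProd r (fun j => pert n (j + l)) α ≤
        C * (2:ℝ) ^ (-(r:ℝ)) *
          Real.cot (π / (2 * (2 ^ n + 1))) ^ ((r : ℝ) / (n : ℝ)) := by
  refine ⟨(2:ℝ)^(4*n+4), by positivity, ?_⟩
  intro α _ r hr l
  have hθ : π / (2 * (2 ^ n + 1)) = EvilAux.th n := rfl
  rw [hθ]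
  have hA1 : (1:ℝ) ≤ Real.cot (EvilAux.th n) := EvilAux.one_le_cot_th hn
  have hA0 : (0:ℝ) < Real.cot (EvilAux.th n) := EvilAux.cot_th_pos hn
  have hrpow_nonneg : (0:ℝ) ≤ (r:ℝ) / (n:ℝ) := by positivity
  have hArn : (1:ℝ) ≤ Real.cot (EvilAux.th n) ^ ((r:ℝ)/(n:ℝ)) := by
    have h := Real.rpow_le_rpow_of_exponent_le hA1 hrpow_nonneg
    rwa [Real.rpow_zero] at h
  obtain ⟨d, hd, hdvd⟩ := EvilAux.exists_shift n hn l
  obtain ⟨p, hp⟩ : ∃ p, p = n * ((r - 1 - d) / n) := ⟨_, rfl⟩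
  obtain ⟨c, hc⟩ : ∃ c, c = (r - 1 - d) % n := ⟨_, rfl⟩
  have hdm := Nat.div_add_mod (r - 1 - d) n
  rw [← hp, ← hc] at hdm
  have hcn : c < n := by rw [hc]; exact Nat.mod_lt _ (by omega)
  rcases Nat.eq_zero_or_pos ((r - 1 - d) / n) with hm0 | hm1
  · -- m = 0 : r small
    have hp0 : p = 0 := by rw [hp, hm0, Nat.mul_zero]
    have hr2n : r ≤ 2 * n := by omega
    have hP1 : PiProd r (fun j => pert n (j + l)) α ≤ 1 := by
      unfold PiProd
      exact Finset.prod_le_one (fun j _ => abs_nonneg _) (fun j _ => Real.abs_cos_le_one _)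
    have h2 : (1:ℝ) ≤ (2:ℝ)^(4*n+4) * (2:ℝ)^(-(r:ℝ)) := by
      rw [← Real.rpow_natCast (2:ℝ) (4*n+4), ← Real.rpow_add two_pos]
      have h3 : (0:ℝ) ≤ ((4*n+4 : ℕ):ℝ) + (-(r:ℝ)) := by
        push_cast
        have : (r:ℝ) ≤ 2*n := by exact_mod_cast hr2n
        linarith
      calc (1:ℝ) = (2:ℝ) ^ (0:ℝ) := (Real.rpow_zero 2).symm
        _ ≤ _ := Real.rpow_le_rpow_of_exponent_le one_le_two h3
    calc PiProd r (fun j => pert n (j + l)) α ≤ 1 := hP1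
      _ = 1 * 1 := (mul_one 1).symm
      _ ≤ ((2:ℝ)^(4*n+4) * (2:ℝ)^(-(r:ℝ))) * Real.cot (EvilAux.th n) ^ ((r:ℝ)/(n:ℝ)) := by
          apply mul_le_mul h2 hArn (by norm_num) (by positivity)
  · -- main case
    have hpn : n ≤ p := by
      rw [hp]
      calc n = n * 1 := (Nat.mul_one n).symm
        _ ≤ n * ((r - 1 - d) / n) := Nat.mul_le_mul_left n hm1
    have hrge : d + 1 + n * ((r - 1 - d) / n) ≤ r := by rw [← hp]; omega
    have hrle : r ≤ n * ((r - 1 - d) / n) + 2 * n := by rw [← hp]; omega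
    have hsub : Finset.Ico (d+1) (d+1+n*((r - 1 - d) / n)) ⊆ Finset.range r := by
      intro x hx
      rw [Finset.mem_Ico] at hx
      rw [Finset.mem_range]
      omega
    have hP : PiProd r (fun j => pert n (j + l)) α ≤
        ∏ j ∈ Finset.Ico (d+1) (d+1+n*((r - 1 - d) / n)),
          |Real.cos (2 ^ j * α * π + (pert n (j + l) : ℝ) * π / 2)| := by
      unfold PiProd
      rw [← Finset.prod_sdiff hsub]
      have h1 : (∏ j ∈ Finset.range r \ Finset.Ico (d+1) (d+1+n*((r - 1 - d) / n)),
          |Real.cos (2 ^ j * α * π + (pert n (j + l) : ℝ) * π / 2)|) ≤ 1 :=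
        Finset.prod_le_one (fun j _ => abs_nonneg _) (fun j _ => Real.abs_cos_le_one _)
      have h2 : (0:ℝ) ≤ ∏ j ∈ Finset.Ico (d+1) (d+1+n*((r - 1 - d) / n)),
          |Real.cos (2 ^ j * α * π + (pert n (j + l) : ℝ) * π / 2)| :=
        Finset.prod_nonneg (fun j _ => abs_nonneg _)
      nlinarith [mul_le_mul_of_nonneg_right h1 h2]
    rw [EvilAux.prod_eq_Q hn α l d hdvd ((r - 1 - d) / n)] at hP
    -- now bound Qprod
    have hQb := EvilAux.Qbound hn ((2:ℝ)^(d+1) * (α * π)) ((r - 1 - d) / n)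
    have hpowpos : (0:ℝ) < ((2:ℝ)^n)^((r - 1 - d) / n) := by positivity
    have hb : (2:ℝ)^(n+2) ≤ (2:ℝ)^(4*n+4) * (2:ℝ)^(-(r:ℝ)) *
        (2:ℝ)^(n*((r - 1 - d) / n)) := by
      have he1 : (2:ℝ)^(4*n+4) * (2:ℝ)^(n*((r - 1 - d) / n)) =
          (2:ℝ)^(4*n+4+n*((r - 1 - d) / n)) := (pow_add 2 (4*n+4) (n*((r - 1 - d) / n))).symm
      calc (2:ℝ)^(n+2) = (2:ℝ)^(((n+2:ℕ)):ℝ) := by rw [Real.rpow_natCast]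
        _ ≤ (2:ℝ)^((((4*n+4+n*((r - 1 - d) / n) : ℕ)):ℝ) + (-(r:ℝ))) := by
            apply Real.rpow_le_rpow_of_exponent_le one_le_two
            push_cast
            have h4 : (r:ℝ) ≤ (n:ℝ)*((((r - 1 - d) / n) : ℕ):ℝ) + 2*n := by exact_mod_cast hrle
            linarith
        _ = (2:ℝ)^((4*n+4+n*((r - 1 - d) / n) : ℕ):ℝ) * (2:ℝ)^(-(r:ℝ)) := by
            rw [Real.rpow_add two_pos]
        _ = (2:ℝ)^(4*n+4+n*((r - 1 - d) / n)) * (2:ℝ)^(-(r:ℝ)) := by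
            rw [Real.rpow_natCast]
        _ = (2:ℝ)^(4*n+4) * (2:ℝ)^(-(r:ℝ)) * (2:ℝ)^(n*((r - 1 - d) / n)) := by
            rw [← he1]; ring
    have ha : Real.cot (EvilAux.th n) ^ ((r - 1 - d) / n) ≤
        Real.cot (EvilAux.th n) ^ ((r:ℝ)/(n:ℝ)) := by
      rw [← Real.rpow_natCast (Real.cot (EvilAux.th n)) ((r - 1 - d) / n)]
      apply Real.rpow_le_rpow_of_exponent_le hA1
      rw [le_div_iff₀ (by positivity : (0:ℝ) < (n:ℝ))]
      have : (((r - 1 - d) / n : ℕ):ℝ) * (n:ℝ) = ((n * ((r - 1 - d) / n) : ℕ) : ℝ) := by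
        push_cast; ring
      rw [this]
      have h5 : n * ((r - 1 - d) / n) ≤ r := by omega
      exact_mod_cast h5
    have hgoal2 : (2:ℝ)^(n+2) * Real.cot (EvilAux.th n) ^ ((r - 1 - d) / n) ≤
        ((2:ℝ)^(4*n+4) * (2:ℝ)^(-(r:ℝ)) * Real.cot (EvilAux.th n) ^ ((r:ℝ)/(n:ℝ))) *
          ((2:ℝ)^n)^((r - 1 - d) / n) := by
      have he2 : ((2:ℝ)^n)^((r - 1 - d) / n) = (2:ℝ)^(n*((r - 1 - d) / n)) := by
        rw [← pow_mul]
      rw [he2]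
      calc (2:ℝ)^(n+2) * Real.cot (EvilAux.th n) ^ ((r - 1 - d) / n)
          ≤ ((2:ℝ)^(4*n+4) * (2:ℝ)^(-(r:ℝ)) * (2:ℝ)^(n*((r - 1 - d) / n))) *
            (Real.cot (EvilAux.th n) ^ ((r:ℝ)/(n:ℝ))) := by
            apply mul_le_mul hb ha (pow_nonneg hA0.le _) (by positivity)
        _ = _ := by ring
    have hQfin : EvilAux.Qprod n ((2:ℝ)^(d+1) * (α * π)) ((r - 1 - d) / n) ≤
        (2:ℝ)^(4*n+4) * (2:ℝ)^(-(r:ℝ)) * Real.cot (EvilAux.th n) ^ ((r:ℝ)/(n:ℝ)) := by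
      apply le_of_mul_le_mul_right _ hpowpos
      calc EvilAux.Qprod n ((2:ℝ)^(d+1) * (α * π)) ((r - 1 - d) / n) *
            ((2:ℝ)^n)^((r - 1 - d) / n)
          ≤ (2:ℝ)^(n+2) * Real.cot (EvilAux.th n) ^ ((r - 1 - d) / n) := hQb
        _ ≤ _ := hgoal2
    exact le_trans hP hQfin


end
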